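/- For a product of channels, the optimal two-message Chernoff exponent is subadditive: if P_hat = P^{(1)} × ⋯ × P^{(k)} is the product channel, then max over input pairs (x⃗,x⃗') of d_C(x⃗, x⃗', P_hat) is at most Σ_{i=1}^k max over pairs (x,x') of d_C(x, x', P^{(i)}). -/

import Mathlib

open Real Finset

/-- Pointwise lower bound: `a*b ≤ a^(1-s) * b^s` for `a,b ∈ [0,1]`, `s ∈ [0,1]`. -/
lemma aux_pt {a b s : ℝ} (ha0 : 0 ≤ a) (ha1 : a ≤ 1) (hb0 : 0 ≤ b) (hb1 : b ≤ 1)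
    (hs0 : 0 ≤ s) (hs1 : s ≤ 1) : a * b ≤ a ^ (1 - s) * b ^ s := by
  have h1 : a ≤ a ^ (1 - s) := by
    rcases eq_or_lt_of_le ha0 with h | h
    · rcases eq_or_lt_of_le (sub_nonneg.mpr hs1) with h2 | h2
      · rw [← h, ← h2, Real.rpow_zero]; linarith
      · rw [← h, Real.zero_rpow (ne_of_gt h2)]
    · calc a = a ^ (1:ℝ) := (Real.rpow_one a).symm
        _ ≤ a ^ (1 - s) := Real.rpow_le_rpow_of_exponent_ge h ha1 (by linarith)
  have h2 : b ≤ b ^ s := by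
    rcases eq_or_lt_of_le hb0 with h | h
    · rcases eq_or_lt_of_le hs0 with h2 | h2
      · rw [← h, ← h2, Real.rpow_zero]; linarith
      · rw [← h, Real.zero_rpow (ne_of_gt h2)]
    · calc b = b ^ (1:ℝ) := (Real.rpow_one b).symm
        _ ≤ b ^ s := Real.rpow_le_rpow_of_exponent_ge h hb1 hs1
  exact mul_le_mul h1 h2 hb0 (Real.rpow_nonneg ha0 _)

/-- Uniform bound on the Chernoff integrand for a single channel. -/
lemma aux_bound {Y : Type*} [Fintype Y] (P P' : Y → ℝ)
    (h0 : ∀ y, 0 ≤ P y) (h0' : ∀ y, 0 ≤ P' y)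
    (h1 : ∑ y, P y = 1) (h1' : ∑ y, P' y = 1) (s : ℝ) (hs0 : 0 ≤ s) (hs1 : s ≤ 1) :
    - Real.log (∑ y, P y ^ (1 - s) * P' y ^ s)
      ≤ 0 ⊔ (- Real.log (∑ y, P y * P' y)) := by
  set g := ∑ y, P y ^ (1 - s) * P' y ^ s with hg
  set q := ∑ y, P y * P' y with hq
  have hg0 : 0 ≤ g := Finset.sum_nonneg fun y _ =>
    mul_nonneg (Real.rpow_nonneg (h0 y) _) (Real.rpow_nonneg (h0' y) _)
  have hPle1 : ∀ y, P y ≤ 1 := fun y => by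
    rw [← h1]; exact Finset.single_le_sum (fun y _ => h0 y) (Finset.mem_univ y)
  have hP'le1 : ∀ y, P' y ≤ 1 := fun y => by
    rw [← h1']; exact Finset.single_le_sum (fun y _ => h0' y) (Finset.mem_univ y)
  have hqg : q ≤ g := Finset.sum_le_sum fun y _ =>
    aux_pt (h0 y) (hPle1 y) (h0' y) (hP'le1 y) hs0 hs1
  rcases eq_or_lt_of_le hg0 with h | hgpos
  · rw [← h, Real.log_zero, neg_zero]; exact le_sup_left
  · have hq0 : 0 ≤ q := Finset.sum_nonneg fun y _ => mul_nonneg (h0 y) (h0' y)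
    rcases eq_or_lt_of_le hq0 with hq' | hqpos
    · -- disjoint supports: then s = 0 or s = 1, and g = 1
      have hzero : ∀ y, P y * P' y = 0 := by
        intro y
        have := (Finset.sum_eq_zero_iff_of_nonneg
          (fun y _ => mul_nonneg (h0 y) (h0' y))).mp hq'.symm
        exact this y (Finset.mem_univ y)
      have hs : s = 0 ∨ s = 1 := by
        by_contra hcon
        push_neg at hcon
        have hs0' : 0 < s := lt_of_le_of_ne hs0 (Ne.symm hcon.1)
        have hs1' : s < 1 := lt_of_le_of_ne hs1 hcon.2
        have : g = 0 := by
          apply Finset.sum_eq_zero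
          intro y _
          rcases mul_eq_zero.mp (hzero y) with h | h
          · rw [h, Real.zero_rpow (by linarith)]; ring
          · rw [h, Real.zero_rpow (ne_of_gt hs0')]; ring
        exact absurd this (ne_of_gt hgpos)
      have hg1 : g = 1 := by
        rcases hs with rfl | rfl
        · simp only [hg, sub_zero, Real.rpow_one, Real.rpow_zero, mul_one]; exact h1
        · simp only [hg, sub_self, Real.rpow_one, Real.rpow_zero, one_mul]; exact h1'
      rw [hg1, Real.log_one, neg_zero]; exact le_sup_left
    · have : Real.log q ≤ Real.log g := Real.log_le_log hqpos hqg
      exact le_sup_of_le_right (by linarith)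

theorem stmt4 {k : ℕ} (X Y : Fin k → Type*)
    [∀ i, Fintype (X i)] [∀ i, Fintype (Y i)]
    [∀ i, Nonempty (X i)] [∀ i, Nonempty (Y i)]
    (P : ∀ i, X i → Y i → ℝ)
    (hP0 : ∀ i x y, 0 ≤ P i x y) (hP1 : ∀ i x, ∑ y, P i x y = 1) :
    (⨆ x : ∀ i, X i, ⨆ x' : ∀ i, X i, ⨆ s : Set.Icc (0:ℝ) 1,
        - Real.log (∑ y : ∀ i, Y i,
          (∏ i, P i (x i) (y i)) ^ (1 - (s:ℝ)) * (∏ i, P i (x' i) (y i)) ^ (s:ℝ)))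
      ≤ ∑ i, ⨆ x : X i, ⨆ x' : X i, ⨆ s : Set.Icc (0:ℝ) 1,
          - Real.log (∑ y, (P i x y) ^ (1 - (s:ℝ)) * (P i x' y) ^ (s:ℝ)) := by
  classical
  -- single-channel exponent
  set f : ∀ i, X i → X i → ℝ → ℝ :=
    fun i a b s => - Real.log (∑ y, (P i a y) ^ (1 - s) * (P i b y) ^ s) with hf
  -- boundedness in s
  have hBs : ∀ i a b, BddAbove (Set.range fun s : Set.Icc (0:ℝ) 1 => f i a b s) := by
    intro i a b
    refine ⟨0 ⊔ (- Real.log (∑ y, P i a y * P i b y)), ?_⟩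
    rintro _ ⟨s, rfl⟩
    exact aux_bound _ _ (hP0 i a) (hP0 i b) (hP1 i a) (hP1 i b) s s.2.1 s.2.2
  -- single terms are below the per-channel supremum
  have hle : ∀ i a b (s : Set.Icc (0:ℝ) 1),
      f i a b s ≤ ⨆ x : X i, ⨆ x' : X i, ⨆ s : Set.Icc (0:ℝ) 1, f i x x' s := by
    intro i a b s
    calc f i a b s ≤ ⨆ s : Set.Icc (0:ℝ) 1, f i a b s := le_ciSup (hBs i a b) s
      _ ≤ ⨆ x' : X i, ⨆ s : Set.Icc (0:ℝ) 1, f i a x' s :=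
          le_ciSup (f := fun x' : X i => ⨆ s : Set.Icc (0:ℝ) 1, f i a x' s)
            (Set.Finite.bddAbove (Set.finite_range _)) b
      _ ≤ ⨆ x : X i, ⨆ x' : X i, ⨆ s : Set.Icc (0:ℝ) 1, f i x x' s :=
          le_ciSup (f := fun x : X i => ⨆ x' : X i, ⨆ s : Set.Icc (0:ℝ) 1, f i x x' s)
            (Set.Finite.bddAbove (Set.finite_range _)) a
  -- the per-channel supremum is nonnegative
  have hsup0 : ∀ i, 0 ≤ ⨆ x : X i, ⨆ x' : X i, ⨆ s : Set.Icc (0:ℝ) 1, f i x x' s := by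
    intro i
    have a := Classical.arbitrary (X i)
    have h0 : f i a a ((0:ℝ)) = 0 := by
      have hsum : (∑ y, (P i a y) ^ (1 - (0:ℝ)) * (P i a y) ^ (0:ℝ)) = 1 := by
        simpa using hP1 i a
      simp only [hf, hsum, Real.log_one, neg_zero]
    exact (le_of_eq h0.symm).trans (hle i a a ⟨0, by norm_num⟩)
  -- reduce to a single triple of inputs
  refine ciSup_le fun x => ciSup_le fun x' => ciSup_le fun s => ?_
  -- factorize the product-channel sum
  have hfact : (∑ y : ∀ i, Y i,
      (∏ i, P i (x i) (y i)) ^ (1 - (s:ℝ)) * (∏ i, P i (x' i) (y i)) ^ (s:ℝ))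
      = ∏ i, ∑ y, (P i (x i) y) ^ (1 - (s:ℝ)) * (P i (x' i) y) ^ (s:ℝ) := by
    rw [Fintype.prod_sum]
    refine Finset.sum_congr rfl fun y _ => ?_
    rw [← Real.finset_prod_rpow _ _ (fun i _ => hP0 i (x i) (y i)) _,
        ← Real.finset_prod_rpow _ _ (fun i _ => hP0 i (x' i) (y i)) _,
        ← Finset.prod_mul_distrib]
  rw [hfact]
  set g : Fin k → ℝ := fun i => ∑ y, (P i (x i) y) ^ (1 - (s:ℝ)) * (P i (x' i) y) ^ (s:ℝ)
    with hgdef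
  have hg0 : ∀ i, 0 ≤ g i := fun i => Finset.sum_nonneg fun y _ =>
    mul_nonneg (Real.rpow_nonneg (hP0 _ _ _) _) (Real.rpow_nonneg (hP0 _ _ _) _)
  by_cases hz : ∃ i, g i = 0
  · obtain ⟨i0, hi0⟩ := hz
    rw [Finset.prod_eq_zero (Finset.mem_univ i0) hi0, Real.log_zero, neg_zero]
    exact Finset.sum_nonneg fun i _ => hsup0 i
  · push_neg at hz
    rw [Real.log_prod (fun i _ => hz i), ← Finset.sum_neg_distrib]
    exact Finset.sum_le_sum fun i _ => hle i (x i) (x' i) s
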